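/- Let h : ℝ → ℝ and define f : S^{3×3} → ℝ by f(ε) = h(det ε). Then f is symmetric polyconvex if and only if h is constant. -/

import Mathlib

open Matrix

/-- The symmetric part `(F + Fᵀ)/2` of a 3×3 matrix. -/
noncomputable def symPart (F : Matrix (Fin 3) (Fin 3) ℝ) : Matrix (Fin 3) (Fin 3) ℝ :=
  (1 / 2 : ℝ) • (F + Fᵀ)

/-- The cofactor matrix: `(cof F)_{ij} = (-1)^{i+j}` times the determinant of the 2×2
matrix obtained from `F` by deleting row `i` and column `j`. -/
noncomputable def cof (F : Matrix (Fin 3) (Fin 3) ℝ) : Matrix (Fin 3) (Fin 3) ℝ :=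
  Matrix.of fun i j =>
    (-1 : ℝ) ^ ((i : ℕ) + (j : ℕ)) * (F.submatrix i.succAbove j.succAbove).det

/-- Frobenius inner product `A:B = Σ_{i,j} A_{ij} B_{ij}` of 3×3 matrices. -/
def mdot (A B : Matrix (Fin 3) (Fin 3) ℝ) : ℝ := ∑ i, ∑ j, A i j * B i j

/-- A function `W : ℝ^{3×3} → ℝ` is polyconvex if there is a convex function
`G : ℝ^{3×3} × ℝ^{3×3} × ℝ → ℝ` with `W F = G (F, cof F, det F)` for all `F`. -/
def Polyconvex3 (W : Matrix (Fin 3) (Fin 3) ℝ → ℝ) : Prop :=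
  ∃ G : Matrix (Fin 3) (Fin 3) ℝ × Matrix (Fin 3) (Fin 3) ℝ × ℝ → ℝ,
    ConvexOn ℝ Set.univ G ∧ ∀ F : Matrix (Fin 3) (Fin 3) ℝ, W F = G (F, cof F, F.det)

/-- `f : S^{3×3} → ℝ` is symmetric polyconvex if `F ↦ f (Fˢ)` is polyconvex. -/
def SymPolyconvex3 (f : Matrix (Fin 3) (Fin 3) ℝ → ℝ) : Prop :=
  Polyconvex3 (fun F => f (symPart F))

/-- `B ∈ S^{3×3}` is negative semi-definite: `Bx·x ≤ 0` for all `x ∈ ℝ³`. -/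
def NegSemidefM (B : Matrix (Fin 3) (Fin 3) ℝ) : Prop :=
  ∀ x : Fin 3 → ℝ, B.mulVec x ⬝ᵥ x ≤ 0

/-- `A ∈ S^{3×3}` is positive semi-definite: `Ax·x ≥ 0` for all `x ∈ ℝ³`. -/
def PosSemidefM (A : Matrix (Fin 3) (Fin 3) ℝ) : Prop :=
  ∀ x : Fin 3 → ℝ, 0 ≤ A.mulVec x ⬝ᵥ x

/-- The symmetrized tensor product `a ⊙ b = (a⊗b + b⊗a)/2`. -/
noncomputable def symProd (a b : Fin 3 → ℝ) : Matrix (Fin 3) (Fin 3) ℝ :=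
  (1 / 2 : ℝ) • (vecMulVec a b + vecMulVec b a)

/-- `f : S^{3×3} → ℝ` is symmetric rank-one convex if `t ↦ f (ε + t a⊙b)` is convex
for every symmetric `ε` and all `a, b ∈ ℝ³`. -/
def SymRankOneConvex3 (f : Matrix (Fin 3) (Fin 3) ℝ → ℝ) : Prop :=
  ∀ ε : Matrix (Fin 3) (Fin 3) ℝ, ε.IsSymm → ∀ a b : Fin 3 → ℝ,
    ConvexOn ℝ Set.univ (fun t : ℝ => f (ε + t • symProd a b))

lemma cof_fin_three (a b c d e f g i j : ℝ) :
    cof !![a,b,c;d,e,f;g,i,j] =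
      !![e*j-f*i, -(d*j-f*g), d*i-e*g;
         -(b*j-c*i), a*j-c*g, -(a*i-b*g);
         b*f-c*e, -(a*f-c*d), a*e-b*d] := by
  ext p q
  fin_cases p <;> fin_cases q <;>
    simp [cof, Matrix.det_fin_two, Fin.succAbove, Fin.lt_def, -Fin.val_pos_iff, -Fin.val_fin_lt] <;> ring

lemma symPart_det (u v τ : ℝ) :
    (symPart !![(1:ℝ),0,τ;0,u,0;0,0,v]).det = u*v - u*τ^2/4 := by
  have : symPart !![(1:ℝ),0,τ;0,u,0;0,0,v] = !![(1:ℝ),0,τ/2;0,u,0;τ/2,0,v] := by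
    ext p q
    fin_cases p <;> fin_cases q <;>
      simp only [symPart, Matrix.smul_apply, Matrix.add_apply, Matrix.transpose_apply] <;>
      simp [Matrix.vecHead, Matrix.vecTail] <;> ring
  rw [this, Matrix.det_fin_three]
  simp
  ring

/-- `ε ↦ h (det ε)` is symmetric polyconvex on `S^{3×3}` iff `h` is constant. -/
theorem symmetric_polyconvex_det_3d (h : ℝ → ℝ) :
    SymPolyconvex3 (fun ε => h ε.det) ↔ ∀ s t : ℝ, h s = h t := by
  constructor
  · rintro ⟨G, hG, hW⟩ s t
    have key : ∀ u v : ℝ, h (u*v) ≤ h (u*v - u/4) := by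
      intro u v
      set F : ℝ → Matrix (Fin 3) (Fin 3) ℝ := fun τ => !![(1:ℝ),0,τ;0,u,0;0,0,v] with hF
      have hmid : (1/2 : ℝ) • (F 1, cof (F 1), (F 1).det)
          + (1/2 : ℝ) • (F (-1), cof (F (-1)), (F (-1)).det)
          = (F 0, cof (F 0), (F 0).det) := by
        simp only [hF, cof_fin_three, Matrix.det_fin_three, Prod.smul_mk, Prod.mk_add_mk,
          Prod.mk.injEq]
        refine ⟨?_, ?_, ?_⟩
        · ext p q; fin_cases p <;> fin_cases q <;>
            simp [Matrix.vecHead, Matrix.vecTail] <;> ring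
        · ext p q; fin_cases p <;> fin_cases q <;>
            simp [Matrix.vecHead, Matrix.vecTail] <;> ring
        · simp [Matrix.vecHead, Matrix.vecTail]; ring
      have hc := hG.2 (Set.mem_univ (F 1, cof (F 1), (F 1).det))
        (Set.mem_univ (F (-1), cof (F (-1)), (F (-1)).det))
        (by norm_num : (0:ℝ) ≤ 1/2) (by norm_num : (0:ℝ) ≤ 1/2) (by norm_num)
      rw [hmid] at hc
      have e0 := hW (F 0)
      have e1 := hW (F 1)
      have e2 := hW (F (-1))
      simp only [hF] at e0 e1 e2
      rw [symPart_det] at e0 e1 e2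
      rw [← e0, ← e1, ← e2] at hc
      norm_num at hc
      linarith [hc]
    have mono : ∀ p q : ℝ, h p ≤ h q := by
      intro p q
      rcases eq_or_ne p q with rfl | hpq
      · exact le_refl _
      · have hu : (4*(p-q)) ≠ 0 := by
          intro hz
          apply hpq
          nlinarith [hz]
        have hk := key (4*(p-q)) (p/(4*(p-q)))
        have e : (4*(p-q)) * (p/(4*(p-q))) = p := by field_simp
        rw [e] at hk
        have e2 : p - 4*(p-q)/4 = q := by ring
        rw [e2] at hk
        exact hk
    exact le_antisymm (mono s t) (mono t s)
  · intro hc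
    refine ⟨fun _ => h 0, convexOn_const _ convex_univ, fun F => ?_⟩
    exact hc _ 0
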